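/- For every graph G, M(G) ≤ Δ⁺(G). -/

import Mathlib

open SimpleGraph

/-- The set `W` induces a path in `G`. -/
def InducesPath {V : Type*} (G : SimpleGraph V) (W : Set V) : Prop :=
  ∃ n : ℕ, Nonempty ((G.induce W) ≃g SimpleGraph.pathGraph n)

/-- The set `U` is covered by `p` vertex-disjoint induced paths of `G`. -/
def IsPathCoverOn {V : Type*} (G : SimpleGraph V) (U : Set V) (p : ℕ) : Prop :=
  ∃ parts : Fin p → Set V,
    (∀ i, (parts i).Nonempty) ∧
    (Pairwise fun i j => Disjoint (parts i) (parts j)) ∧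
    (⋃ i, parts i) = U ∧
    ∀ i, InducesPath G (parts i)

/-- The induced subgraph of `G` on `U` is a vertex-disjoint union of `p` paths. -/
def IsDisjointPathsOn {V : Type*} (G : SimpleGraph V) (U : Set V) (p : ℕ) : Prop :=
  ∃ parts : Fin p → Set V,
    (∀ i, (parts i).Nonempty) ∧
    (Pairwise fun i j => Disjoint (parts i) (parts j)) ∧
    (⋃ i, parts i) = U ∧
    (∀ i, InducesPath G (parts i)) ∧
    (∀ i j, i ≠ j → ∀ u ∈ parts i, ∀ v ∈ parts j, ¬ G.Adj u v)

/-- The path cover number `P(G)`. -/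
noncomputable def pathCoverNumber {V : Type*} (G : SimpleGraph V) : ℕ :=
  sInf {p | IsPathCoverOn G Set.univ p}

/-- `Δ(G)`: max of `p - q` over deletions of `q` vertices leaving `p` disjoint paths. -/
noncomputable def deltaLow {V : Type*} [Fintype V] (G : SimpleGraph V) : ℤ :=
  sSup {d : ℤ | ∃ (S : Finset V) (p : ℕ),
    IsDisjointPathsOn G ((↑S : Set V)ᶜ) p ∧ d = (p : ℤ) - S.card}

/-- `Δ⁺(G)`: min of `p + q` over deletions of `q` vertices leaving `p` disjoint paths. -/
noncomputable def deltaPlus {V : Type*} [Fintype V] (G : SimpleGraph V) : ℕ :=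
  sInf {k | ∃ (S : Finset V) (p : ℕ),
    IsDisjointPathsOn G ((↑S : Set V)ᶜ) p ∧ k = p + S.card}

/-- `T⁻(G)`. -/
noncomputable def Tminus {V : Type*} [Fintype V] (G : SimpleGraph V) : ℤ :=
  sSup {d : ℤ | ∃ S : Finset V, (G.induce ((↑S : Set V)ᶜ)).IsAcyclic ∧
    d = (pathCoverNumber (G.induce ((↑S : Set V)ᶜ)) : ℤ) - S.card}

/-- `T⁺(G)`. -/
noncomputable def Tplus {V : Type*} [Fintype V] (G : SimpleGraph V) : ℕ :=
  sInf {k | ∃ S : Finset V, (G.induce ((↑S : Set V)ᶜ)).IsAcyclic ∧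
    k = pathCoverNumber (G.induce ((↑S : Set V)ᶜ)) + S.card}

/-- `A` is a symmetric real matrix whose graph is `G`, i.e. `A ∈ S(G)`. -/
def MatchesGraph {V : Type*} [Fintype V] (G : SimpleGraph V) (A : Matrix V V ℝ) : Prop :=
  A.IsSymm ∧ ∀ i j : V, i ≠ j → (A i j ≠ 0 ↔ G.Adj i j)

/-- The nullity of a square real matrix. -/
noncomputable def matNullity {V : Type*} [Fintype V] (A : Matrix V V ℝ) : ℕ :=
  Module.finrank ℝ (LinearMap.ker A.mulVecLin)

/-- `M(G)`: the maximum nullity (= maximum eigenvalue multiplicity). -/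
noncomputable def maxNullity {V : Type*} [Fintype V] [DecidableEq V] (G : SimpleGraph V) : ℕ :=
  sSup {k | ∃ A : Matrix V V ℝ, MatchesGraph G A ∧ matNullity A = k}

/-- `mr(G)`: the minimum rank. -/
noncomputable def minRank {V : Type*} [Fintype V] [DecidableEq V] (G : SimpleGraph V) : ℕ :=
  sInf {k | ∃ A : Matrix V V ℝ, MatchesGraph G A ∧ A.rank = k}

/-- Vertices colored by the zero forcing process started from `B`. -/
inductive ZFClosed {V : Type*} (G : SimpleGraph V) (B : Set V) : V → Prop
  | init (v : V) (h : v ∈ B) : ZFClosed G B v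
  | force (u v : V) (hu : ZFClosed G B u) (huv : G.Adj u v)
      (hforce : ∀ w, G.Adj u w → w ≠ v → ZFClosed G B w) : ZFClosed G B v

/-- `B` is a zero forcing set of `G`. -/
def IsZeroForcingSet {V : Type*} (G : SimpleGraph V) (B : Set V) : Prop :=
  ∀ v, ZFClosed G B v

/-- `Z(G)`: the zero forcing number. -/
noncomputable def zeroForcingNumber {V : Type*} [Fintype V] (G : SimpleGraph V) : ℕ :=
  sInf {k | ∃ B : Finset V, IsZeroForcingSet G ↑B ∧ B.card = k}

/-- The star graph on `Fin n`: vertex `0` adjacent to all others. -/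
def starGraph (n : ℕ) : SimpleGraph (Fin n) :=
  SimpleGraph.fromRel (fun i _ => i.val = 0)

/-- The wheel graph: a hub (`none`) joined to every vertex of a cycle on `Fin m`. -/
def wheelGraph (m : ℕ) : SimpleGraph (Option (Fin m)) :=
  SimpleGraph.fromRel (fun u v =>
    match u, v with
    | none, some _ => True
    | some i, some j => j.val = (i.val + 1) % m
    | _, _ => False)

/-- The `n`-sun: a cycle on `Fin n` (the `inl` vertices) with a pendant vertex
(`inr i`) attached to each cycle vertex (`inl i`). -/
def sunGraph (n : ℕ) : SimpleGraph (Fin n ⊕ Fin n) :=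
  SimpleGraph.fromRel (fun u v =>
    match u, v with
    | .inl i, .inl j => j.val = (i.val + 1) % n
    | .inl i, .inr j => i = j
    | _, _ => False)


private lemma nullity_le_aux {V : Type*} [Fintype V] [DecidableEq V]
    (G : SimpleGraph V) (A : Matrix V V ℝ) (hA : MatchesGraph G A)
    (S : Finset V) (p : ℕ) (h : IsDisjointPathsOn G ((↑S : Set V)ᶜ) p) :
    matNullity A ≤ p + S.card := by
  classical
  obtain ⟨parts, hne, hdisj, hcover, hpath, hsep⟩ := h
  choose n hiso using hpath
  have e : ∀ i, SimpleGraph.pathGraph (n i) ≃g G.induce (parts i) :=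
    fun i => (hiso i).some.symm
  set vtx : ∀ i, Fin (n i) → V := fun i k => ((e i) k : V) with hvtx
  have hmem : ∀ i k, vtx i k ∈ parts i := fun i k => ((e i) k).2
  have npos : ∀ i, 0 < n i := by
    intro i
    obtain ⟨v, hv⟩ := hne i
    exact Fin.pos ((e i).symm ⟨v, hv⟩)
  have hinj : ∀ i, Function.Injective (vtx i) := by
    intro i k l hkl
    exact (e i).injective (Subtype.coe_injective hkl)
  have hadj : ∀ i (k l : Fin (n i)),
      G.Adj (vtx i k) (vtx i l) ↔ (SimpleGraph.pathGraph (n i)).Adj k l := by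
    intro i k l
    constructor
    · intro hkl
      exact (e i).map_rel_iff.mp hkl
    · intro hkl
      exact (e i).map_rel_iff.mpr hkl
  have Azero : ∀ u v : V, u ≠ v → ¬ G.Adj u v → A u v = 0 := by
    intro u v h1 h2
    by_contra hA0
    exact h2 ((hA.2 u v h1).mp hA0)
  -- The injection from the kernel
  let Φ : LinearMap.ker A.mulVecLin →ₗ[ℝ] ((Fin p ⊕ {x // x ∈ S}) → ℝ) :=
    { toFun := fun x => Sum.elim (fun i => x.1 (vtx i ⟨0, npos i⟩)) (fun s => x.1 s.1)
      map_add' := by intro x y; funext u; cases u <;> simp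
      map_smul' := by intro c x; funext u; cases u <;> simp }
  have hΦinj : Function.Injective Φ := by
    rw [injective_iff_map_eq_zero]
    intro x h0
    have hx0 : ∀ i, x.1 (vtx i ⟨0, npos i⟩) = 0 := fun i => congrFun h0 (Sum.inl i)
    have hxS : ∀ s ∈ S, x.1 s = 0 := fun s hs => congrFun h0 (Sum.inr ⟨s, hs⟩)
    have hker : A.mulVec x.1 = 0 := x.2
    have hrow : ∀ v, (∑ u, A v u * x.1 u) = 0 := by
      intro v
      simpa [Matrix.mulVec, dotProduct] using congrFun hker v
    have claim : ∀ i (t : ℕ) (ht : t < n i), x.1 (vtx i ⟨t, ht⟩) = 0 := by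
      intro i t
      induction t using Nat.strong_induction_on with
      | _ t IH =>
        intro ht
        match t, ht with
        | 0, ht => exact hx0 i
        | (t' + 1), ht =>
          have hlt : t' < n i := Nat.lt_of_succ_lt ht
          set v : V := vtx i ⟨t', hlt⟩ with hv
          set w : V := vtx i ⟨t' + 1, ht⟩ with hw
          have hvw : v ≠ w := by
            intro hvw
            have := hinj i hvw
            simp [Fin.ext_iff] at this
          have hAvw : A v w ≠ 0 := by
            refine (hA.2 v w hvw).mpr ?_
            refine (hadj i _ _).mpr ?_
            rw [SimpleGraph.pathGraph_adj]
            left; rfl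
          have hsum : (∑ u, A v u * x.1 u) = A v w * x.1 w := by
            refine Finset.sum_eq_single_of_mem w (Finset.mem_univ w) ?_
            intro u _ huw
            by_cases huS : u ∈ S
            · rw [hxS u huS, mul_zero]
            · have hucompl : u ∈ ((↑S : Set V)ᶜ) := huS
              rw [← hcover] at hucompl
              obtain ⟨j, hj⟩ := Set.mem_iUnion.mp hucompl
              by_cases hij : j = i
              · subst hij
                set l : Fin (n j) := (e j).symm ⟨u, hj⟩ with hl
                have hu : u = vtx j l := by
                  simp [hvtx, hl]
                rcases lt_trichotomy l.val (t' + 1) with hc | hc | hc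
                · have := IH l.val hc l.isLt
                  rw [hu]
                  rw [show (⟨l.val, l.isLt⟩ : Fin (n j)) = l from Fin.eta l l.isLt] at this
                  rw [this, mul_zero]
                · exfalso
                  apply huw
                  rw [hu, hw]
                  congr 1
                  exact Fin.ext hc
                · have hvu : v ≠ u := by
                    rw [hu]
                    intro hvu
                    have := hinj j hvu
                    rw [Fin.ext_iff] at this
                    simp only at this
                    omega
                  have hnadj : ¬ G.Adj v u := by
                    rw [hu, hv]
                    intro hadj'
                    have := (hadj j _ _).mp hadj'
                    rw [SimpleGraph.pathGraph_adj] at this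
                    simp only at this
                    omega
                  rw [Azero v u hvu hnadj, zero_mul]
              · have hvu : v ≠ u := by
                  intro hvu
                  have hvparts : v ∈ parts i := hmem i _
                  rw [hvu] at hvparts
                  exact (Set.disjoint_left.mp (hdisj (Ne.symm hij))) hvparts hj
                have hnadj : ¬ G.Adj v u :=
                  hsep i j (fun hij' => hij (hij'.symm)) v (hmem i _) u hj
                rw [Azero v u hvu hnadj, zero_mul]
          have : A v w * x.1 w = 0 := by rw [← hsum]; exact hrow v
          exact (mul_eq_zero.mp this).resolve_left hAvw
    have : x.1 = 0 := by
      funext u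
      by_cases huS : u ∈ S
      · exact hxS u huS
      · have hucompl : u ∈ ((↑S : Set V)ᶜ) := huS
        rw [← hcover] at hucompl
        obtain ⟨j, hj⟩ := Set.mem_iUnion.mp hucompl
        set l : Fin (n j) := (e j).symm ⟨u, hj⟩ with hl
        have hu : u = vtx j l := by simp [hvtx, hl]
        have := claim j l.val l.isLt
        rw [show (⟨l.val, l.isLt⟩ : Fin (n j)) = l from Fin.eta l l.isLt] at this
        rw [hu, this]
        rfl
    exact Subtype.ext this
  have hfin : matNullity A ≤ Module.finrank ℝ ((Fin p ⊕ {x // x ∈ S}) → ℝ) :=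
    LinearMap.finrank_le_finrank_of_injective hΦinj
  rwa [Module.finrank_fintype_fun_eq_card, Fintype.card_sum, Fintype.card_fin,
    Fintype.card_coe] at hfin

theorem maxNullity_le_deltaPlus {V : Type*} [Fintype V] [DecidableEq V]
    (G : SimpleGraph V) :
    maxNullity G ≤ deltaPlus G := by
  classical
  have hset : {k | ∃ (S : Finset V) (p : ℕ),
      IsDisjointPathsOn G ((↑S : Set V)ᶜ) p ∧ k = p + S.card}.Nonempty := by
    refine ⟨0 + Finset.univ.card, Finset.univ, 0, ?_, rfl⟩
    refine ⟨Fin.elim0, fun i => i.elim0, fun i j _ => i.elim0, ?_, fun i => i.elim0,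
      fun i j _ => i.elim0⟩
    simp
  rw [deltaPlus]
  refine le_csInf hset ?_
  rintro k ⟨S, p, hdp, rfl⟩
  rw [maxNullity]
  apply csSup_le
  · refine ⟨matNullity (fun i j => if G.Adj i j then (1 : ℝ) else 0),
      (fun i j => if G.Adj i j then (1 : ℝ) else 0), ⟨?_, ?_⟩, rfl⟩
    · ext i j
      show (if G.Adj j i then (1 : ℝ) else 0) = if G.Adj i j then (1 : ℝ) else 0
      rw [SimpleGraph.adj_comm]
    · intro i j _
      by_cases hadj : G.Adj i j <;> simp [hadj]
  · rintro k ⟨A, hA, rfl⟩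
    exact nullity_le_aux G A hA S p hdp
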